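/- Let k ≥ 1 and n ≥ 1 be natural numbers. Then for all θ ∈ ℝ, |sin(θ)·sin(2kθ)·sin((2k)²θ)···sin((2k)ⁿθ)| ≤ sin(πk/(2k+1))ⁿ. -/

import Mathlib

open Real Finset

set_option maxHeartbeats 1000000

lemma abs_sin_add_int_mul_pi (y : ℝ) (n : ℤ) : |Real.sin (y + n * π)| = |Real.sin y| := by
  rw [Real.sin_add, Real.sin_int_mul_pi, mul_zero, add_zero, abs_mul]
  have h0 : Real.sin ((n:ℝ) * π) = 0 := Real.sin_int_mul_pi n
  have h2 := Real.sin_sq_add_cos_sq ((n:ℝ) * π)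
  have h1 : |Real.cos ((n:ℝ) * π)| = 1 := by
    rw [← Real.sqrt_sq_eq_abs]
    rw [h0] at h2
    rw [show Real.cos ((n:ℝ)*π)^2 = 1 by nlinarith]
    simp
  rw [h1, mul_one]

lemma gderiv (k : ℕ) (hk : 1 ≤ k) (t : ℝ) :
    HasDerivAt (fun t : ℝ => Real.cos t ^ (2*k) * Real.sin (2*(k:ℝ)*t))
      (2*(k:ℝ) * Real.cos t ^ (2*k-1) * Real.cos ((2*(k:ℝ)+1)*t)) t := by
  have h1 : HasDerivAt (fun t : ℝ => Real.cos t ^ (2*k))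
      ((2*k : ℕ) * Real.cos t ^ (2*k-1) * (-Real.sin t)) t := (Real.hasDerivAt_cos t).pow _
  have h2 : HasDerivAt (fun t : ℝ => Real.sin (2*(k:ℝ)*t))
      (Real.cos (2*(k:ℝ)*t) * (2*(k:ℝ)*1)) t := ((hasDerivAt_id t).const_mul (2*(k:ℝ))).sin
  have h3 := h1.mul h2
  refine h3.congr_deriv ?_
  have hp : Real.cos t ^ (2*k) = Real.cos t ^ (2*k-1) * Real.cos t := by
    conv_lhs => rw [show 2*k = 2*k-1+1 from by omega]
    rw [pow_succ]
  rw [show (2*(k:ℝ)+1)*t = 2*(k:ℝ)*t + t from by ring, Real.cos_add, hp]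
  push_cast
  ring

lemma reduction (k : ℕ) (x : ℝ) :
    ∃ t, 0 ≤ t ∧ t ≤ π/2 ∧ |Real.sin x| = Real.cos t ∧
      |Real.sin (2*(k:ℝ)*x)| = |Real.sin (2*(k:ℝ)*t)| := by
  have hπ := Real.pi_pos
  set l : ℤ := round ((x - π/2)/π) with hl
  set u : ℝ := x - π/2 - l*π with hu
  have hu2 : |u| ≤ π/2 := by
    have h := abs_sub_round ((x - π/2)/π)
    have : u = ((x - π/2)/π - l) * π := by rw [hu]; field_simp
    rw [this, abs_mul, abs_of_pos hπ]
    calc |(x - π/2)/π - ↑l| * π ≤ (1/2) * π := by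
          exact mul_le_mul_of_nonneg_right h hπ.le
      _ = π/2 := by ring
  refine ⟨|u|, abs_nonneg _, hu2, ?_, ?_⟩
  · have hx : x = (π/2 + u) + l*π := by rw [hu]; ring
    rw [hx, abs_sin_add_int_mul_pi,
      show Real.sin (π/2 + u) = Real.cos u by rw [Real.sin_add]; simp,
      Real.cos_abs]
    exact abs_of_nonneg (Real.cos_nonneg_of_mem_Icc
      ⟨by linarith [(abs_le.mp hu2).1], (abs_le.mp hu2).2⟩)
  · have hx2 : 2*(k:ℝ)*x = 2*(k:ℝ)*u + ((k + 2*k*l : ℤ) : ℝ)*π := by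
      push_cast
      rw [hu]; ring
    rw [hx2, abs_sin_add_int_mul_pi]
    rcases abs_cases u with ⟨h, _⟩ | ⟨h, _⟩
    · rw [h]
    · rw [h, show 2*(k:ℝ)*(-u) = -(2*(k:ℝ)*u) by ring, Real.sin_neg, abs_neg]

lemma cos_ge_one_sub_sq (x : ℝ) (hx : 0 ≤ x) (hx2 : x ≤ π) : 1 - x^2/2 ≤ Real.cos x := by
  have h1 : Real.cos x = 1 - 2 * Real.sin (x/2)^2 := by
    have h := Real.cos_two_mul' (x/2)
    rw [show 2*(x/2) = x by ring] at h
    nlinarith [Real.sin_sq_add_cos_sq (x/2)]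
  have h2 : Real.sin (x/2) ≤ x/2 := by
    rcases eq_or_lt_of_le hx with h | h
    · simp [← h]
    · exact (Real.sin_lt (by linarith)).le
  have h3 : 0 ≤ Real.sin (x/2) := Real.sin_nonneg_of_nonneg_of_le_pi (by linarith) (by linarith)
  nlinarith

lemma hd_lemma (K : ℝ) (hK : 2 ≤ K) : 1/(1 + π^2/(4*K)) ≤ 1 - π^2/(8*(2*K+1)) := by
  have hπ := Real.pi_pos
  have hπ4 := Real.pi_le_four
  have hπ2 : π^2 ≤ 16 := by nlinarith
  have habs : ∀ a b : ℝ, 0 < a → 0 < b → 4*b ≤ a → b ≤ 2/5 → 1/(1+a) ≤ 1 - b := by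
    intro a b ha hb h4 h25
    rw [div_le_iff₀ (by positivity)]
    nlinarith [mul_nonneg (sub_nonneg.mpr h4) (by linarith : (0:ℝ) ≤ 1 - b)]
  apply habs
  · positivity
  · positivity
  · rw [← mul_div_assoc, div_le_div_iff₀ (by positivity) (by positivity)]
    nlinarith [sq_nonneg π]
  · rw [div_le_iff₀ (by positivity)]
    nlinarith

lemma core (k : ℕ) (hk : 1 ≤ k) :
    Real.cos (π/(2*(k:ℝ))) ^ (2*k) ≤ Real.cos (π/(2*(2*(k:ℝ)+1))) ^ (2*k+1) := by
  have hπ := Real.pi_pos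
  have hπ3 := Real.pi_gt_three
  have hπ4 := Real.pi_le_four
  have hk1 : (1:ℝ) ≤ (k:ℝ) := by exact_mod_cast hk
  set δ : ℝ := π/(2*(2*(k:ℝ)+1)) with hδ
  have hδpos : 0 < δ := by rw [hδ]; positivity
  have hδ1 : δ ≤ 1 := by
    rw [hδ, div_le_one (by positivity)]
    nlinarith
  have hδval : δ^2 = π^2/(4*(2*(k:ℝ)+1)^2) := by rw [hδ, div_pow]; ring_nf
  clear_value δ
  have hcosδ : 0 ≤ Real.cos δ :=
    Real.cos_nonneg_of_mem_Icc ⟨by linarith, by linarith⟩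
  -- RHS lower bound
  have hc : 1 - (2*(k:ℝ)+1) * (δ^2/2) ≤ Real.cos δ ^ (2*k+1) := by
    have hb : 1 - δ^2/2 ≤ Real.cos δ :=
      cos_ge_one_sub_sq δ hδpos.le (by linarith)
    have h0 : (0:ℝ) ≤ 1 - δ^2/2 := by nlinarith
    have hbern : 1 + (2*k+1 : ℕ) * (-(δ^2/2)) ≤ (1 + (-(δ^2/2))) ^ (2*k+1) :=
      one_add_mul_le_pow (by nlinarith) (2*k+1)
    calc 1 - (2*(k:ℝ)+1) * (δ^2/2) = 1 + (2*k+1 : ℕ) * (-(δ^2/2)) := by push_cast; ring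
      _ ≤ (1 + (-(δ^2/2))) ^ (2*k+1) := hbern
      _ ≤ Real.cos δ ^ (2*k+1) := by
          apply pow_le_pow_left₀ (by nlinarith)
          linarith
  rcases eq_or_lt_of_le hk1 with h1 | h2
  · -- k = 1
    rw [show π/(2*(k:ℝ)) = π/2 by rw [← h1]; norm_num]
    rw [Real.cos_pi_div_two, zero_pow (by omega)]
    exact pow_nonneg hcosδ _
  · -- k ≥ 2
    have hk2 : (2:ℝ) ≤ (k:ℝ) := by
      have h2' : (1:ℕ) < k := by exact_mod_cast h2
      have : (2:ℕ) ≤ k := h2'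
      exact_mod_cast this
    set z : ℝ := π/(4*(k:ℝ)) with hz
    have hz0 : 0 < z := by rw [hz]; positivity
    have hz1 : z ≤ 1/2 := by
      rw [hz, div_le_iff₀ (by positivity)]; nlinarith
    have hyz : π/(2*(k:ℝ)) = 2*z := by rw [hz]; ring
    have hzval : 2*(k:ℝ) * (2*z^2) = π^2/(4*(k:ℝ)) := by
      rw [hz, div_pow]
      field_simp
      ring
    clear_value z
    rw [hyz]
    have hz1' : z ≤ 1 := by linarith
    -- (a) cos(2z)(1+2z²) ≤ 1
    have hsin : z - z^3/4 < Real.sin z := by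
      have := Real.sin_gt_sub_cube hz0; nlinarith [pow_pos hz0 3]
    have hcosy : Real.cos (2*z) = 1 - 2 * Real.sin z^2 := by
      have h := Real.cos_two_mul' z
      nlinarith [Real.sin_sq_add_cos_sq z]
    have hz3 : z^3 ≤ z := by nlinarith [mul_nonneg (mul_nonneg hz0.le (by linarith : (0:ℝ) ≤ 1 - z)) (by linarith : (0:ℝ) ≤ 1 + z)]
    have hA : 0 ≤ z - z^3/4 := by linarith
    have hsq : (z - z^3/4)^2 ≤ Real.sin z^2 := by nlinarith
    have h6 : z^6 ≤ z^4 := by nlinarith [pow_nonneg hz0.le 4, sq_nonneg z]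
    have hple : (1 - 2*(z - z^3/4)^2) * (1+2*z^2) ≤ 1 := by
      nlinarith [h6, pow_nonneg hz0.le 8, pow_nonneg hz0.le 4]
    have ha : Real.cos (2*z) * (1 + 2*z^2) ≤ 1 := by
      have : Real.cos (2*z) ≤ 1 - 2*(z - z^3/4)^2 := by nlinarith
      nlinarith [sq_nonneg z]
    have hz2pos : (0:ℝ) < 1 + 2*z^2 := by positivity
    have ha' : Real.cos (2*z) ≤ 1/(1+2*z^2) := by
      rw [le_div_iff₀ hz2pos]; exact ha
    -- (b)
    have hcos2z : 0 ≤ Real.cos (2*z) := by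
      apply Real.cos_nonneg_of_mem_Icc
      constructor <;> nlinarith
    have hbern2 : 1 + (2*k:ℕ) * (2*z^2) ≤ (1 + 2*z^2)^(2*k) :=
      one_add_mul_le_pow (by nlinarith) (2*k)
    have hb2 : Real.cos (2*z) ^ (2*k) ≤ 1/(1 + π^2/(4*(k:ℝ))) := by
      calc Real.cos (2*z) ^ (2*k) ≤ (1/(1+2*z^2))^(2*k) :=
            pow_le_pow_left₀ hcos2z ha' _
        _ = 1/(1+2*z^2)^(2*k) := by rw [one_div, one_div, inv_pow]
        _ ≤ 1/(1 + π^2/(4*(k:ℝ))) := by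
            apply one_div_le_one_div_of_le (by positivity)
            calc (1:ℝ) + π^2/(4*(k:ℝ)) = 1 + (2*k:ℕ) * (2*z^2) := by
                  rw [← hzval]; push_cast; ring
              _ ≤ _ := hbern2
    -- (d)
    have hd : 1/(1 + π^2/(4*(k:ℝ))) ≤ 1 - (2*(k:ℝ)+1) * (δ^2/2) := by
      have hbval : (2*(k:ℝ)+1) * (δ^2/2) = π^2/(8*(2*(k:ℝ)+1)) := by
        rw [hδval]
        field_simp
        ring
      rw [hbval]
      exact hd_lemma (k:ℝ) hk2
    calc Real.cos (2*z) ^ (2*k) ≤ 1/(1 + π^2/(4*(k:ℝ))) := hb2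
      _ ≤ 1 - (2*(k:ℝ)+1) * (δ^2/2) := hd
      _ ≤ Real.cos δ ^ (2*k+1) := hc

lemma key_ineq (k : ℕ) (hk : 1 ≤ k) (x : ℝ) :
    |Real.sin x| ^ (2*k) * |Real.sin (2*(k:ℝ)*x)| ≤ Real.cos (π/(2*(2*(k:ℝ)+1))) ^ (2*k+1) := by
  have hπ := Real.pi_pos
  have hk1 : (1:ℝ) ≤ (k:ℝ) := by exact_mod_cast hk
  obtain ⟨t, ht0, htπ, h1, h2⟩ := reduction k x
  rw [h1, h2]
  set δ : ℝ := π/(2*(2*(k:ℝ)+1)) with hδ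
  have hδpos : 0 < δ := by rw [hδ]; positivity
  have hNδ : (2*(k:ℝ)+1) * δ = π/2 := by rw [hδ]; field_simp
  have h3δ : 3*δ ≤ π/2 := by nlinarith
  rcases le_or_gt t δ with hcase | hcase
  · -- t ≤ δ : monotone increasing regime
    have hsinpos : 0 ≤ Real.sin (2*(k:ℝ)*t) := by
      apply Real.sin_nonneg_of_nonneg_of_le_pi (by positivity)
      nlinarith
    rw [abs_of_nonneg hsinpos]
    have hmono : MonotoneOn (fun t : ℝ => Real.cos t ^ (2*k) * Real.sin (2*(k:ℝ)*t))
        (Set.Icc 0 δ) := by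
      apply monotoneOn_of_deriv_nonneg (convex_Icc _ _)
      · exact Continuous.continuousOn (by continuity)
      · intro s hs
        exact (gderiv k hk s).differentiableAt.differentiableWithinAt
      · intro s hs
        rw [interior_Icc] at hs
        rw [(gderiv k hk s).deriv]
        have hc1 : 0 ≤ Real.cos s :=
          Real.cos_nonneg_of_mem_Icc ⟨by nlinarith [hs.1], by nlinarith [hs.2]⟩
        have hc2 : 0 ≤ Real.cos ((2*(k:ℝ)+1)*s) :=
          Real.cos_nonneg_of_mem_Icc ⟨by nlinarith [hs.1], by nlinarith [hs.2]⟩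
        exact mul_nonneg (mul_nonneg (by positivity) (pow_nonneg hc1 _)) hc2
    have hend := hmono ⟨ht0, hcase⟩ ⟨hδpos.le, le_refl δ⟩ hcase
    have hgδ : Real.cos δ ^ (2*k) * Real.sin (2*(k:ℝ)*δ) = Real.cos δ ^ (2*k+1) := by
      rw [show 2*(k:ℝ)*δ = π/2 - δ by nlinarith, Real.sin_pi_div_two_sub, pow_succ]
    simpa [hgδ] using hend
  · rcases le_or_gt t (π/(2*(k:ℝ))) with hcase2 | hcase2
    · -- δ < t ≤ π/(2k) : decreasing regime
      have ht2k : 2*(k:ℝ)*t ≤ π := by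
        have := (le_div_iff₀ (by positivity : (0:ℝ) < 2*(k:ℝ))).mp hcase2
        linarith
      have hsinpos : 0 ≤ Real.sin (2*(k:ℝ)*t) :=
        Real.sin_nonneg_of_nonneg_of_le_pi (by positivity) ht2k
      rw [abs_of_nonneg hsinpos]
      have hanti : AntitoneOn (fun t : ℝ => Real.cos t ^ (2*k) * Real.sin (2*(k:ℝ)*t))
          (Set.Icc δ (π/(2*(k:ℝ)))) := by
        apply antitoneOn_of_deriv_nonpos (convex_Icc _ _)
        · exact Continuous.continuousOn (by continuity)
        · intro s hs
          exact (gderiv k hk s).differentiableAt.differentiableWithinAt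
        · intro s hs
          rw [interior_Icc] at hs
          rw [(gderiv k hk s).deriv]
          have hhalf : π/(2*(k:ℝ)) ≤ π/2 := by
            rw [div_le_div_iff₀ (by positivity) (by norm_num)]
            nlinarith
          have hs2 : s ≤ π/2 := le_trans hs.2.le hhalf
          have hc1 : 0 ≤ Real.cos s :=
            Real.cos_nonneg_of_mem_Icc ⟨by nlinarith [hs.1], hs2⟩
          have hc2 : Real.cos ((2*(k:ℝ)+1)*s) ≤ 0 := by
            apply Real.cos_nonpos_of_pi_div_two_le_of_le
            · nlinarith [hs.1]
            · have h2k : 2*(k:ℝ) ≥ 2 := by linarith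
              have := hs.2
              have hub : (2*(k:ℝ)+1)*s ≤ (2*(k:ℝ)+1) * (π/(2*(k:ℝ))) := by
                apply mul_le_mul_of_nonneg_left this.le (by linarith)
              have : (2*(k:ℝ)+1) * (π/(2*(k:ℝ))) = π + π/(2*(k:ℝ)) := by
                field_simp
              rw [this] at hub
              linarith [hhalf]
          exact mul_nonpos_of_nonneg_of_nonpos
            (mul_nonneg (by positivity) (pow_nonneg hc1 _)) hc2
      have hδle : δ ≤ π/(2*(k:ℝ)) := le_trans hcase.le hcase2
      have hend := hanti ⟨le_refl δ, hδle⟩ ⟨hcase.le, hcase2⟩ hcase.le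
      have hgδ : Real.cos δ ^ (2*k) * Real.sin (2*(k:ℝ)*δ) = Real.cos δ ^ (2*k+1) := by
        rw [show 2*(k:ℝ)*δ = π/2 - δ by nlinarith, Real.sin_pi_div_two_sub, pow_succ]
      simpa [hgδ] using hend
    · -- t > π/(2k) : core estimate
      have hcos0 : 0 ≤ Real.cos t :=
        Real.cos_nonneg_of_mem_Icc ⟨by linarith, htπ⟩
      have hcosle : Real.cos t ≤ Real.cos (π/(2*(k:ℝ))) :=
        Real.cos_le_cos_of_nonneg_of_le_pi (by positivity) (by linarith) hcase2.le
      calc Real.cos t ^ (2*k) * |Real.sin (2*(k:ℝ)*t)|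
          ≤ Real.cos t ^ (2*k) * 1 := by
            apply mul_le_mul_of_nonneg_left (abs_sin_le_one _) (pow_nonneg hcos0 _)
        _ = Real.cos t ^ (2*k) := mul_one _
        _ ≤ Real.cos (π/(2*(k:ℝ))) ^ (2*k) := pow_le_pow_left₀ hcos0 hcosle _
        _ ≤ Real.cos δ ^ (2*k+1) := core k hk

theorem sine_product_bound_general (k n : ℕ) (hk : 1 ≤ k) (hn : 1 ≤ n) (θ : ℝ) :
    |∏ j ∈ Finset.range (n + 1), Real.sin ((2 * (k : ℝ)) ^ j * θ)| ≤
      Real.sin (π * k / (2 * k + 1)) ^ n := by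
  have hπ := Real.pi_pos
  have hk1 : (1:ℝ) ≤ (k:ℝ) := by exact_mod_cast hk
  have hkne : (2*(k:ℝ)+1) ≠ 0 := by positivity
  set s : ℝ := Real.cos (π/(2*(2*(k:ℝ)+1))) with hs
  have hseq : Real.sin (π * k / (2*k+1)) = s := by
    rw [hs, ← Real.cos_pi_div_two_sub]
    congr 1
    field_simp
    ring
  have hs0 : 0 ≤ s := by
    rw [hs]
    apply Real.cos_nonneg_of_mem_Icc
    constructor
    · have : 0 ≤ π/(2*(2*(k:ℝ)+1)) := by positivity
      linarith
    · rw [div_le_div_iff₀ (by positivity) (by norm_num)]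
      nlinarith
  set u : ℕ → ℝ := fun j => |Real.sin ((2*(k:ℝ))^j * θ)| with hu
  have hu0 : ∀ j, 0 ≤ u j := fun j => abs_nonneg _
  have hu1 : ∀ j, u j ≤ 1 := fun j => abs_sin_le_one _
  have hkey : ∀ j, u j ^ (2*k) * u (j+1) ≤ s ^ (2*k+1) := by
    intro j
    have h := key_ineq k hk ((2*(k:ℝ))^j * θ)
    rw [show 2*(k:ℝ) * ((2*(k:ℝ))^j * θ) = (2*(k:ℝ))^(j+1) * θ by rw [pow_succ]; ring] at h
    simp only [hu]
    rw [hs]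
    exact h
  have main : ∀ N : ℕ, (∏ j ∈ Finset.range (N+1), u j) ^ (2*k+1)
      ≤ u 0 * u N ^ (2*k) * (s ^ (2*k+1)) ^ N := by
    intro N
    induction N with
    | zero =>
      exact le_of_eq (by rw [Finset.prod_range_one, pow_zero, mul_one, pow_succ]; ring)
    | succ N ih =>
      rw [Finset.prod_range_succ, mul_pow]
      have hnn : (0:ℝ) ≤ u 0 * u (N+1)^(2*k) * (s^(2*k+1))^N :=
        mul_nonneg (mul_nonneg (hu0 0) (pow_nonneg (hu0 _) _)) (pow_nonneg (pow_nonneg hs0 _) _)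
      calc (∏ j ∈ Finset.range (N+1), u j)^(2*k+1) * u (N+1)^(2*k+1)
          ≤ (u 0 * u N ^ (2*k) * (s^(2*k+1))^N) * u (N+1)^(2*k+1) := by
            exact mul_le_mul_of_nonneg_right ih (pow_nonneg (hu0 _) _)
        _ = (u 0 * u (N+1)^(2*k) * (s^(2*k+1))^N) * (u N ^(2*k) * u (N+1)) := by ring
        _ ≤ (u 0 * u (N+1)^(2*k) * (s^(2*k+1))^N) * s^(2*k+1) :=
            mul_le_mul_of_nonneg_left (hkey N) hnn
        _ = u 0 * u (N+1)^(2*k) * (s^(2*k+1))^(N+1) := by ring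
  rw [Finset.abs_prod, hseq]
  apply le_of_pow_le_pow_left₀ (by omega : 2*k+1 ≠ 0) (pow_nonneg hs0 n)
  have h01 : u 0 * u n ^ (2*k) ≤ 1 :=
    mul_le_one₀ (hu1 0) (pow_nonneg (hu0 _) _) (pow_le_one₀ (hu0 n) (hu1 n))
  calc (∏ j ∈ Finset.range (n+1), u j)^(2*k+1)
      ≤ u 0 * u n ^(2*k) * (s^(2*k+1))^n := main n
    _ ≤ 1 * (s^(2*k+1))^n := by
        exact mul_le_mul_of_nonneg_right h01 (pow_nonneg (pow_nonneg hs0 _) _)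
    _ = (s^n)^(2*k+1) := by rw [one_mul, ← pow_mul, ← pow_mul, mul_comm]
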